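/- Let α < 0, S > 0 and L, M ∈ ℝ satisfy the system 2(L−M)·tanh(L) = −α·√(√3·S) and (M−L)·tanh(M) = −α·√(√3·S). Set K := M − L, β := 1/√(√3·S), and define u₀ : ℝ² → ℝ by u₀(x,y) := cosh(L + 2Kβy) + 2·cosh(K(1−βy) + L)·cosh(√3·Kβx). Then u₀ satisfies the Robin boundary condition on the bottom edge {y = 0}: for every x ∈ ℝ, ∂₂u₀(x,0) = α·u₀(x,0), where ∂₂ denotes the partial derivative with respect to the second variable. (Since the outward unit normal of the triangle along this edge is (0,−1), this is exactly ∂u₀/∂n + α·u₀ = 0 there.) -/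

import Mathlib

/-- The ground state `u₀` of the Robin Laplacian on the equilateral triangle satisfies the
Robin boundary condition `∂u₀/∂n + α·u₀ = 0` on the bottom edge `{y = 0}`, i.e.
`∂₂u₀(x,0) = α·u₀(x,0)` for every `x`. -/
theorem ground_state_robin_bc_bottom (α S L M : ℝ) (hα : α < 0) (hS : 0 < S)
    (hLM1 : 2 * (L - M) * Real.tanh L = -α * Real.sqrt (Real.sqrt 3 * S))
    (hLM2 : (M - L) * Real.tanh M = -α * Real.sqrt (Real.sqrt 3 * S))
    (K β : ℝ) (hK : K = M - L) (hβ : β = 1 / Real.sqrt (Real.sqrt 3 * S))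
    (u₀ : ℝ → ℝ → ℝ)
    (hu : ∀ x y : ℝ, u₀ x y = Real.cosh (L + 2 * K * β * y) +
      2 * Real.cosh (K * (1 - β * y) + L) * Real.cosh (Real.sqrt 3 * K * β * x)) :
    ∀ x : ℝ, deriv (fun t : ℝ => u₀ x t) 0 = α * u₀ x 0 := by
  intro x
  have hM : M = K + L := by rw [hK]; ring
  subst hM
  have hs : 0 < Real.sqrt (Real.sqrt 3 * S) := Real.sqrt_pos.2 (by positivity)
  set s := Real.sqrt (Real.sqrt 3 * S) with hsdef
  have hβs : β * s = 1 := by rw [hβ]; field_simp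
  have hcL : (0:ℝ) < Real.cosh L := Real.cosh_pos L
  have hcM : (0:ℝ) < Real.cosh (K + L) := Real.cosh_pos _
  have h1' : 2 * K * Real.sinh L = α * s * Real.cosh L := by
    have h := hLM1
    rw [Real.tanh_eq_sinh_div_cosh] at h
    field_simp at h
    linarith
  have h2' : K * Real.sinh (K + L) = -α * s * Real.cosh (K + L) := by
    have h := hLM2
    rw [Real.tanh_eq_sinh_div_cosh] at h
    field_simp at h
    linarith
  have e1 : 2 * K * β * Real.sinh L = α * Real.cosh L := by
    linear_combination β * h1' + α * Real.cosh L * hβs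
  have e2 : K * β * Real.sinh (K + L) = -(α * Real.cosh (K + L)) := by
    linear_combination β * h2' - α * Real.cosh (K + L) * hβs
  set c := Real.cosh (Real.sqrt 3 * K * β * x) with hc
  have hlin1 : HasDerivAt (fun y : ℝ => L + 2 * K * β * y) (2 * K * β) 0 := by
    simpa using ((hasDerivAt_id (0:ℝ)).const_mul (2 * K * β)).const_add L
  have hlin2 : HasDerivAt (fun y : ℝ => K * (1 - β * y) + L) (-(K * β)) 0 := by
    have h0 : (fun y : ℝ => K * (1 - β * y) + L) = fun y : ℝ => K + L + -(K * β * y) := by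
      funext y; ring
    rw [h0]
    simpa using (((hasDerivAt_id (0:ℝ)).const_mul (K * β)).neg).const_add (K + L)
  have hd : HasDerivAt (fun y : ℝ => Real.cosh (L + 2 * K * β * y) +
      2 * Real.cosh (K * (1 - β * y) + L) * c)
      (Real.sinh (L + 2 * K * β * 0) * (2 * K * β) +
        2 * (Real.sinh (K * (1 - β * 0) + L) * -(K * β)) * c) 0 := by
    have hA := hlin1.cosh
    have hB := ((hlin2.cosh).const_mul 2).mul_const c
    simpa [mul_assoc, mul_comm, mul_left_comm] using hA.fun_add hB
  have hfun : (fun t : ℝ => u₀ x t) = fun y : ℝ => Real.cosh (L + 2 * K * β * y) +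
      2 * Real.cosh (K * (1 - β * y) + L) * c := by
    funext y; rw [hu]
  rw [hfun, hd.deriv, hu]
  simp only [mul_zero, add_zero, mul_one, sub_zero]
  linear_combination e1 - 2 * Real.cosh (Real.sqrt 3 * K * β * x) * e2
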